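/- Let α ∈ (0,1) and let f : ℝ^d → ℝ^m be bounded and continuous with [f]_{C^α} < ∞. Then there exists a constant C depending only on α and d such that for all t > 0 and h > 0: sup_{x ∈ ℝ^d} |(G_{t+h} * f)(x) − (G_t * f)(x)| ≤ C [f]_{C^α} t^{−α/2} h^α. -/

import Mathlib

open MeasureTheory Set
open scoped ENNReal

noncomputable def heatKernel (d : ℕ) (s : ℝ) (y : (EuclideanSpace ℝ (Fin d))) : ℝ :=
  (4 * Real.pi * s) ^ (-(d : ℝ) / 2) * Real.exp (-(‖y‖ ^ 2) / (4 * s))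

section aux

open Real Filter

lemma aux_bounded {β b : ℝ} (hβ : 0 ≤ β) (hb : 0 < b) :
    ∃ C : ℝ, ∀ x : ℝ, 0 ≤ x → x ^ β * Real.exp (-(b * x ^ 2)) ≤ C := by
  have hlo := rpow_mul_exp_neg_mul_sq_isLittleO_exp_neg hb β
  have hev : ∀ᶠ x : ℝ in atTop, ‖x ^ β * Real.exp (-b * x ^ 2)‖ ≤ 1 * ‖Real.exp (-(1/2) * x)‖ := by
    filter_upwards [hlo.bound one_pos, eventually_ge_atTop (0:ℝ)] with x hx hx0
    exact hx
  obtain ⟨R, hR⟩ := eventually_atTop.1 hev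
  have hcont : ContinuousOn (fun x : ℝ => x ^ β * Real.exp (-(b * x ^ 2))) (Icc 0 (max R 0)) := by
    apply ContinuousOn.mul
    · intro x hx
      exact (Real.continuousAt_rpow_const x β (Or.inr hβ)).continuousWithinAt
    · exact (Real.continuous_exp.comp (by continuity)).continuousOn
  obtain ⟨C0, hC0⟩ := (isCompact_Icc).exists_bound_of_continuousOn hcont
  refine ⟨max C0 1, fun x hx => ?_⟩
  rcases le_or_gt x (max R 0) with hxR | hxR
  · have := hC0 x ⟨hx, hxR⟩
    exact le_trans (le_abs_self _) (le_trans ((Real.norm_eq_abs _) ▸ this) (le_max_left _ _))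
  · have hxR' : R ≤ x := le_of_lt (lt_of_le_of_lt (le_max_left R 0) hxR)
    have := hR x hxR'
    rw [one_mul, Real.norm_eq_abs, Real.norm_eq_abs, Real.abs_exp] at this
    calc x ^ β * Real.exp (-(b * x ^ 2)) ≤ |x ^ β * Real.exp (-b * x ^ 2)| := by
          rw [neg_mul]; exact le_abs_self _
      _ ≤ Real.exp (-(1/2) * x) := this
      _ ≤ 1 := Real.exp_le_one_iff.2 (by nlinarith [lt_of_le_of_lt (le_max_right R 0) hxR])
      _ ≤ max C0 1 := le_max_right _ _

lemma integrable_rexp_norm (d : ℕ) {b : ℝ} (hb : 0 < b) :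
    Integrable (fun y : EuclideanSpace ℝ (Fin d) => Real.exp (-(b * ‖y‖ ^ 2))) := by
  have h := (GaussianFourier.integrable_cexp_neg_mul_sq_norm_add (V := EuclideanSpace ℝ (Fin d))
    (b := (b : ℂ)) (by simpa using hb) 0 0).norm
  refine h.congr (Filter.Eventually.of_forall fun y => ?_)
  simp only [Complex.norm_exp]
  norm_num [Complex.norm_exp, ← Complex.ofReal_pow]

lemma integrable_rpow_mul_rexp (d : ℕ) {β b : ℝ} (hβ : 0 ≤ β) (hb : 0 < b) :
    Integrable (fun y : EuclideanSpace ℝ (Fin d) => ‖y‖ ^ β * Real.exp (-(b * ‖y‖ ^ 2))) := by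
  obtain ⟨C, hC⟩ := aux_bounded hβ (half_pos hb)
  have hmeas : AEStronglyMeasurable
      (fun y : EuclideanSpace ℝ (Fin d) => ‖y‖ ^ β * Real.exp (-(b * ‖y‖ ^ 2))) volume := by
    refine (Measurable.mul ?_ ?_).aestronglyMeasurable
    · exact measurable_norm.pow_const β
    · exact (Real.continuous_exp.comp (by continuity)).measurable
  refine Integrable.mono' ((integrable_rexp_norm d (half_pos hb)).const_mul C) hmeas
    (Filter.Eventually.of_forall fun y => ?_)
  have h1 : 0 ≤ ‖y‖ ^ β := Real.rpow_nonneg (norm_nonneg _) _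
  rw [Real.norm_eq_abs, abs_of_nonneg (mul_nonneg h1 (Real.exp_nonneg _))]
  have : Real.exp (-(b * ‖y‖ ^ 2)) =
      Real.exp (-(b / 2 * ‖y‖ ^ 2)) * Real.exp (-(b / 2 * ‖y‖ ^ 2)) := by
    rw [← Real.exp_add]; ring_nf
  rw [this, ← mul_assoc]
  exact mul_le_mul_of_nonneg_right (hC _ (norm_nonneg _)) (Real.exp_nonneg _)

lemma hk_nonneg (d : ℕ) {s : ℝ} (hs : 0 < s) (y : EuclideanSpace ℝ (Fin d)) :
    0 ≤ heatKernel d s y := by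
  have h1 : (0:ℝ) < 4 * Real.pi * s := by positivity
  exact mul_nonneg (Real.rpow_nonneg h1.le _) (Real.exp_nonneg _)

lemma integrable_hk_mul (d : ℕ) {s β : ℝ} (hs : 0 < s) (hβ : 0 ≤ β) :
    Integrable (fun y : EuclideanSpace ℝ (Fin d) => heatKernel d s y * ‖y‖ ^ β) := by
  have hb : (0:ℝ) < (4 * s)⁻¹ := by positivity
  have h := ((integrable_rpow_mul_rexp d hβ hb).const_mul
    ((4 * Real.pi * s) ^ (-(d : ℝ) / 2)))
  refine h.congr (Filter.Eventually.of_forall fun y => ?_)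
  simp only [heatKernel]
  rw [show -(‖y‖ ^ 2) / (4 * s) = -((4 * s)⁻¹ * ‖y‖ ^ 2) by ring]
  ring

lemma moment_scaling (d : ℕ) {s β : ℝ} (hs : 0 < s) (hβ : 0 ≤ β) :
    ∫ y : EuclideanSpace ℝ (Fin d), heatKernel d s y * ‖y‖ ^ β =
      s ^ (β / 2) * ∫ y : EuclideanSpace ℝ (Fin d), heatKernel d 1 y * ‖y‖ ^ β := by
  set g : EuclideanSpace ℝ (Fin d) → ℝ := fun y => heatKernel d s y * ‖y‖ ^ β with hg
  have key : ∀ z : EuclideanSpace ℝ (Fin d),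
      g (Real.sqrt s • z) = (s ^ (β / 2) * s ^ (-(d : ℝ) / 2)) *
        (heatKernel d 1 z * ‖z‖ ^ β) := by
    intro z
    have hnorm : ‖Real.sqrt s • z‖ = Real.sqrt s * ‖z‖ := by
      rw [norm_smul, Real.norm_eq_abs, abs_of_nonneg (Real.sqrt_nonneg s)]
    have hsq : ‖Real.sqrt s • z‖ ^ 2 = s * ‖z‖ ^ 2 := by
      rw [hnorm, mul_pow, Real.sq_sqrt hs.le]
    have hβpow : ‖Real.sqrt s • z‖ ^ β = s ^ (β / 2) * ‖z‖ ^ β := by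
      rw [hnorm, Real.mul_rpow (Real.sqrt_nonneg s) (norm_nonneg z),
        ← Real.rpow_div_two_eq_sqrt β hs.le]
    have hcoef : (4 * Real.pi * s) ^ (-(d : ℝ) / 2) =
        (4 * Real.pi * 1) ^ (-(d : ℝ) / 2) * s ^ (-(d : ℝ) / 2) := by
      rw [show 4 * Real.pi * s = (4 * Real.pi * 1) * s by ring,
        Real.mul_rpow (by positivity) hs.le]
    have hexp : -(‖Real.sqrt s • z‖ ^ 2) / (4 * s) = -(‖z‖ ^ 2) / (4 * 1) := by
      rw [hsq]; field_simp
    simp only [hg, heatKernel, hexp, hβpow, hcoef]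
    ring
  have hcv := MeasureTheory.Measure.integral_comp_smul_of_nonneg (volume) g (Real.sqrt s)
    (hR := Real.sqrt_nonneg s)
  simp only [key, finrank_euclideanSpace_fin] at hcv
  rw [MeasureTheory.integral_const_mul] at hcv
  have hpow : ((Real.sqrt s) ^ d : ℝ) = s ^ ((d : ℝ) / 2) := by
    rw [← Real.rpow_natCast (Real.sqrt s) d, ← Real.rpow_div_two_eq_sqrt _ hs.le]
  have hne : ((Real.sqrt s) ^ d : ℝ) ≠ 0 := by positivity
  rw [smul_eq_mul] at hcv
  have : (∫ y, g y) = (Real.sqrt s ^ d) * ((s ^ (β / 2) * s ^ (-(d : ℝ) / 2)) *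
      ∫ z : EuclideanSpace ℝ (Fin d), heatKernel d 1 z * ‖z‖ ^ β) := by
    rw [hcv]; field_simp
  rw [hg] at this
  rw [this, hpow, ← mul_assoc, ← mul_assoc, ← Real.rpow_add hs, ← Real.rpow_add hs]
  congr 2
  ring

lemma hk_hasDerivAt (d : ℕ) {s : ℝ} (hs : 0 < s) (y : EuclideanSpace ℝ (Fin d)) :
    HasDerivAt (fun u => heatKernel d u y)
      (heatKernel d s y * (‖y‖ ^ 2 / (4 * s ^ 2) - d / (2 * s))) s := by
  have hπ : (0:ℝ) < Real.pi := Real.pi_pos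
  have h4s : (0:ℝ) < 4 * Real.pi * s := by positivity
  have hA0 : HasDerivAt (fun u : ℝ => 4 * Real.pi * u) (4 * Real.pi) s := by
    simpa using (hasDerivAt_id s).const_mul (4 * Real.pi)
  have hA : HasDerivAt (fun u : ℝ => (4 * Real.pi * u) ^ (-(d : ℝ) / 2))
      ((4 * Real.pi) * (-(d : ℝ) / 2) * (4 * Real.pi * s) ^ (-(d : ℝ) / 2 - 1)) s :=
    hA0.rpow_const (Or.inl h4s.ne')
  have hg : HasDerivAt (fun u : ℝ => -(‖y‖ ^ 2) / 4 * u⁻¹)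
      (-(‖y‖ ^ 2) / 4 * (-(s ^ 2)⁻¹)) s := (hasDerivAt_inv hs.ne').const_mul _
  have hB : HasDerivAt (fun u : ℝ => Real.exp (-(‖y‖ ^ 2) / (4 * u)))
      (Real.exp (-(‖y‖ ^ 2) / (4 * s)) * (-(‖y‖ ^ 2) / 4 * (-(s ^ 2)⁻¹))) s := by
    have := hg.exp
    refine this.congr_of_eventuallyEq ?_ |>.congr_deriv ?_
    · filter_upwards [] with u
      rw [show -(‖y‖ ^ 2) / 4 * u⁻¹ = -(‖y‖ ^ 2) / (4 * u) by ring]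
    · rw [show -(‖y‖ ^ 2) / 4 * s⁻¹ = -(‖y‖ ^ 2) / (4 * s) by ring]
  have hprod := hA.mul hB
  have heq : (fun u => (4 * Real.pi * u) ^ (-(d : ℝ) / 2) *
      Real.exp (-(‖y‖ ^ 2) / (4 * u))) = fun u => heatKernel d u y := by
    funext u; rw [heatKernel]
  replace hprod : HasDerivAt (fun u => heatKernel d u y) _ s :=
    hprod.congr_of_eventuallyEq (Filter.Eventually.of_forall fun u => (congrFun heq u).symm)
  convert hprod using 1
  rw [heatKernel, Real.rpow_sub h4s, Real.rpow_one]
  field_simp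
  ring

lemma scalar_est {α : ℝ} (hα : 0 < α) (hα1 : α < 1) {t h : ℝ} (ht : 0 < t) (hh : 0 < h) :
    ∫ s in t..(t + h), s ^ (α / 2 - 1) ≤
      ((2 / α) * 2 ^ (α / 2) + 1) * (t ^ (-α / 2) * h ^ α) := by
  have hpos : (0:ℝ) < t ^ (-α / 2) * h ^ α := by positivity
  have hth : t ≤ t + h := by linarith
  have hnotin : (0:ℝ) ∉ uIcc t (t + h) := by
    rw [Set.mem_uIcc]; push_neg
    constructor <;> intro hc <;> linarith
  rcases le_or_gt h t with hht | hht
  · have hint : IntervalIntegrable (fun s : ℝ => s ^ (α / 2 - 1)) volume t (t + h) :=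
      intervalIntegral.intervalIntegrable_rpow (Or.inr hnotin)
    have hmono : ∫ s in t..(t + h), s ^ (α / 2 - 1) ≤ ∫ s in t..(t + h), t ^ (α / 2 - 1) := by
      apply intervalIntegral.integral_mono_on hth hint (intervalIntegrable_const)
      intro s hs
      exact Real.rpow_le_rpow_of_nonpos ht hs.1 (by linarith)
    have hconst : ∫ s in t..(t + h), (t ^ (α / 2 - 1) : ℝ) = h * t ^ (α / 2 - 1) := by
      rw [intervalIntegral.integral_const, smul_eq_mul]; ring_nf
    have hkey : h * t ^ (α / 2 - 1) ≤ t ^ (-α / 2) * h ^ α := by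
      have h1 : h = h ^ α * h ^ (1 - α) := by
        rw [← Real.rpow_add hh]; norm_num
      have h2 : h ^ (1 - α) ≤ t ^ (1 - α) :=
        Real.rpow_le_rpow hh.le hht (by linarith)
      have h3 : t ^ (1 - α) * t ^ (α / 2 - 1) = t ^ (-α / 2) := by
        rw [← Real.rpow_add ht]; ring_nf
      calc h * t ^ (α / 2 - 1) = h ^ α * (h ^ (1 - α) * t ^ (α / 2 - 1)) := by
            rw [← mul_assoc, ← h1]
        _ ≤ h ^ α * (t ^ (1 - α) * t ^ (α / 2 - 1)) := by
            apply mul_le_mul_of_nonneg_left _ (Real.rpow_nonneg hh.le α)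
            exact mul_le_mul_of_nonneg_right h2 (Real.rpow_nonneg ht.le _)
        _ = t ^ (-α / 2) * h ^ α := by rw [h3]; ring
    have hC1 : (1:ℝ) ≤ (2 / α) * 2 ^ (α / 2) + 1 := by
      have : (0:ℝ) ≤ (2 / α) * 2 ^ (α / 2) := by positivity
      linarith
    calc ∫ s in t..(t + h), s ^ (α / 2 - 1) ≤ h * t ^ (α / 2 - 1) := by
          rw [← hconst]; exact hmono
      _ ≤ t ^ (-α / 2) * h ^ α := hkey
      _ ≤ ((2 / α) * 2 ^ (α / 2) + 1) * (t ^ (-α / 2) * h ^ α) := by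
          nlinarith
  · have hval : ∫ s in t..(t + h), s ^ (α / 2 - 1) =
        ((t + h) ^ (α / 2) - t ^ (α / 2)) / (α / 2) := by
      rw [integral_rpow (Or.inl (by linarith))]
      norm_num
    have h1 : (t + h) ^ (α / 2) ≤ (2 * h) ^ (α / 2) :=
      Real.rpow_le_rpow (by linarith) (by linarith) (by linarith)
    have h2 : ((2:ℝ) * h) ^ (α / 2) = 2 ^ (α / 2) * h ^ (α / 2) :=
      Real.mul_rpow (by norm_num) hh.le
    have h3 : h ^ (α / 2) = h ^ α * h ^ (-α / 2) := by
      rw [← Real.rpow_add hh]; ring_nf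
    have h4 : h ^ (-α / 2) ≤ t ^ (-α / 2) :=
      Real.rpow_le_rpow_of_nonpos ht hht.le (by linarith)
    have htpos : (0:ℝ) ≤ t ^ (α / 2) := Real.rpow_nonneg ht.le _
    calc ∫ s in t..(t + h), s ^ (α / 2 - 1)
        = ((t + h) ^ (α / 2) - t ^ (α / 2)) / (α / 2) := hval
      _ ≤ (2 ^ (α / 2) * (h ^ α * h ^ (-α / 2))) / (α / 2) := by
          apply div_le_div_of_nonneg_right ?_ (by linarith) |>.trans_eq rfl
          rw [h2, h3] at h1
          linarith
      _ = (2 / α) * 2 ^ (α / 2) * (h ^ α * h ^ (-α / 2)) := by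
          field_simp
      _ ≤ (2 / α) * 2 ^ (α / 2) * (h ^ α * t ^ (-α / 2)) := by
          refine mul_le_mul_of_nonneg_left ?_ (by positivity)
          exact mul_le_mul_of_nonneg_left h4 (Real.rpow_nonneg hh.le α)
      _ ≤ ((2 / α) * 2 ^ (α / 2) + 1) * (t ^ (-α / 2) * h ^ α) := by
          nlinarith [hpos]

end aux

set_option maxHeartbeats 1000000 in
/-- temporal Hölder continuity of the heat semigroup on `C^α` data:
`‖e^((t+h)Δ)f − e^(tΔ)f‖_(L^∞) ≲ [f]_(C^α) t^(−α/2) h^α`. -/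
theorem stmt15 (d : ℕ) (hd : 1 ≤ d) (α : ℝ) (hα : 0 < α) (hα1 : α < 1) :
    ∃ C : ℝ, 0 < C ∧
      ∀ m : ℕ, 1 ≤ m →
      ∀ f : (EuclideanSpace ℝ (Fin d)) → EuclideanSpace ℝ (Fin m),
        Continuous f → (∃ B : ℝ, ∀ x, ‖f x‖ ≤ B) →
        ∀ M : ℝ, (∀ x y, ‖f x - f y‖ ≤ M * ‖x - y‖ ^ α) →
        ∀ t h : ℝ, 0 < t → 0 < h → ∀ x : (EuclideanSpace ℝ (Fin d)),
          ‖(∫ y, heatKernel d (t + h) y • f (x - y)) - ∫ y, heatKernel d t y • f (x - y)‖ ≤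
            C * M * t ^ (-α / 2) * h ^ α := by
  classical
  set cA := ∫ z : EuclideanSpace ℝ (Fin d), heatKernel d 1 z * ‖z‖ ^ α with hcA
  set cA2 := ∫ z : EuclideanSpace ℝ (Fin d), heatKernel d 1 z * ‖z‖ ^ (α + 2) with hcA2
  set K := (2 / α) * 2 ^ (α / 2) + 1 with hKdef
  set Ctot := (d : ℝ) * cA / 2 + cA2 / 4 with hCtotdef
  have hcA0 : 0 ≤ cA := integral_nonneg fun y =>
    mul_nonneg (hk_nonneg d one_pos y) (Real.rpow_nonneg (norm_nonneg y) _)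
  have hcA20 : 0 ≤ cA2 := integral_nonneg fun y =>
    mul_nonneg (hk_nonneg d one_pos y) (Real.rpow_nonneg (norm_nonneg y) _)
  have hK0 : (0:ℝ) < K := by rw [hKdef]; positivity
  have hCtot0 : 0 ≤ Ctot := by
    rw [hCtotdef]
    have : (0:ℝ) ≤ (d : ℝ) * cA := mul_nonneg (Nat.cast_nonneg d) hcA0
    linarith
  refine ⟨Ctot * K + 1, by nlinarith [mul_nonneg hCtot0 hK0.le], ?_⟩
  intro m hm f hf hBex M hM t h ht hh x
  obtain ⟨B, hB⟩ := hBex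
  have hth : t ≤ t + h := by linarith
  have hth0 : (0:ℝ) < t + h := by linarith
  -- M is nonnegative
  have hM0 : 0 ≤ M := by
    have hd0 : 0 < d := hd
    set e : EuclideanSpace ℝ (Fin d) := EuclideanSpace.single ⟨0, hd0⟩ (1:ℝ) with he
    have hne : ‖e - 0‖ = 1 := by
      rw [sub_zero, he, EuclideanSpace.norm_single, norm_one]
    have := hM e 0
    rw [hne, Real.one_rpow, mul_one] at this
    exact le_trans (norm_nonneg _) this
  -- continuity of the kernel in y
  have hkc : ∀ s : ℝ, 0 < s → Continuous (fun y : EuclideanSpace ℝ (Fin d) =>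
      heatKernel d s y) := by
    intro s hs
    simp only [heatKernel]
    exact continuous_const.mul (Real.continuous_exp.comp
      ((continuous_norm.pow 2).neg.div_const _))
  -- integrability of the kernel
  have hint : ∀ s : ℝ, 0 < s →
      Integrable (fun y : EuclideanSpace ℝ (Fin d) => heatKernel d s y) := by
    intro s hs
    have := integrable_hk_mul d hs (le_refl (0:ℝ))
    refine this.congr (Filter.Eventually.of_forall fun y => ?_)
    simp
  -- integrability of kernel • f
  have hintf : ∀ s : ℝ, 0 < s →
      Integrable (fun y : EuclideanSpace ℝ (Fin d) => heatKernel d s y • f (x - y)) := by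
    intro s hs
    refine Integrable.mono' ((hint s hs).mul_const B)
      (((hkc s hs).smul (hf.comp (continuous_const.sub continuous_id))).aestronglyMeasurable)
      (Filter.Eventually.of_forall fun y => ?_)
    rw [norm_smul, Real.norm_eq_abs, abs_of_nonneg (hk_nonneg d hs y)]
    exact mul_le_mul_of_nonneg_left (hB _) (hk_nonneg d hs y)
  -- equal masses
  have hmass : (∫ y : EuclideanSpace ℝ (Fin d), heatKernel d (t + h) y) =
      ∫ y : EuclideanSpace ℝ (Fin d), heatKernel d t y := by
    have key : ∀ s : ℝ, 0 < s → (∫ y : EuclideanSpace ℝ (Fin d), heatKernel d s y) =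
        ∫ z : EuclideanSpace ℝ (Fin d), heatKernel d 1 z * ‖z‖ ^ (0:ℝ) := by
      intro s hs
      have h1 : (∫ y : EuclideanSpace ℝ (Fin d), heatKernel d s y) =
          ∫ y : EuclideanSpace ℝ (Fin d), heatKernel d s y * ‖y‖ ^ (0:ℝ) := by
        congr 1; funext y; rw [Real.rpow_zero, mul_one]
      rw [h1, moment_scaling d hs (le_refl (0:ℝ))]
      norm_num
    rw [key _ hth0, key _ ht]
  -- rewrite the difference
  have hdiff : (∫ y, heatKernel d (t + h) y • f (x - y)) -
      (∫ y, heatKernel d t y • f (x - y)) =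
      ∫ y, (heatKernel d (t + h) y - heatKernel d t y) • (f (x - y) - f x) := by
    have e : (fun y : EuclideanSpace ℝ (Fin d) =>
        (heatKernel d (t + h) y - heatKernel d t y) • (f (x - y) - f x)) =
        fun y => (heatKernel d (t + h) y • f (x - y) - heatKernel d t y • f (x - y)) -
          (heatKernel d (t + h) y • f x - heatKernel d t y • f x) := by
      funext y
      rw [sub_smul, smul_sub, smul_sub]
      abel
    have I1 := hintf _ hth0
    have I0 := hintf _ ht
    have J1 : Integrable (fun y : EuclideanSpace ℝ (Fin d) => heatKernel d (t + h) y • f x)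
        volume := (hint _ hth0).smul_const (f x)
    have J0 : Integrable (fun y : EuclideanSpace ℝ (Fin d) => heatKernel d t y • f x)
        volume := (hint _ ht).smul_const (f x)
    have I10 : Integrable (fun y : EuclideanSpace ℝ (Fin d) =>
        heatKernel d (t + h) y • f (x - y) - heatKernel d t y • f (x - y)) volume := I1.sub I0
    have J10 : Integrable (fun y : EuclideanSpace ℝ (Fin d) =>
        heatKernel d (t + h) y • f x - heatKernel d t y • f x) volume := J1.sub J0
    rw [e, integral_sub I10 J10, integral_sub I1 I0, integral_sub J1 J0,
      integral_smul_const, integral_smul_const, hmass, sub_self, sub_zero]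
  rw [hdiff]
  -- the time derivative of the kernel
  set D : ℝ → EuclideanSpace ℝ (Fin d) → ℝ := fun s y =>
    heatKernel d s y * (‖y‖ ^ 2 / (4 * s ^ 2) - d / (2 * s)) with hD
  have hDcont : ∀ y : EuclideanSpace ℝ (Fin d),
      ContinuousOn (fun u : ℝ => D u y) (uIcc t (t + h)) := by
    intro y
    have hsub : uIcc t (t + h) ⊆ {u : ℝ | 0 < u} := by
      rw [uIcc_of_le hth]
      intro u hu
      exact lt_of_lt_of_le ht hu.1
    refine ContinuousOn.mono ?_ hsub
    simp only [hD, heatKernel]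
    apply ContinuousOn.mul
    · apply ContinuousOn.mul
      · apply ContinuousOn.rpow_const (continuous_const.mul continuous_id).continuousOn
        intro u hu
        exact Or.inl (by have : (0:ℝ) < u := hu; show 4 * Real.pi * u ≠ 0; positivity)
      · apply Real.continuous_exp.comp_continuousOn
        apply ContinuousOn.div continuousOn_const (continuous_const.mul continuous_id).continuousOn
        intro u hu
        have : (0:ℝ) < u := hu
        show 4 * u ≠ 0
        positivity
    · apply ContinuousOn.sub
      · apply ContinuousOn.div continuousOn_const
          (continuous_const.mul (continuous_pow 2)).continuousOn
        intro u hu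
        have : (0:ℝ) < u := hu
        show 4 * u ^ 2 ≠ 0
        positivity
      · apply ContinuousOn.div continuousOn_const
          (continuous_const.mul continuous_id).continuousOn
        intro u hu
        have : (0:ℝ) < u := hu
        show 2 * u ≠ 0
        positivity
  have hFTC : ∀ y : EuclideanSpace ℝ (Fin d),
      (∫ u in t..(t + h), D u y) = heatKernel d (t + h) y - heatKernel d t y := by
    intro y
    refine intervalIntegral.integral_eq_sub_of_hasDerivAt
      (f := fun u => heatKernel d u y) (fun u hu => ?_)
      ((hDcont y).intervalIntegrable)
    rw [uIcc_of_le hth] at hu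
    exact hk_hasDerivAt d (lt_of_lt_of_le ht hu.1) y
  have hΔ : ∀ y : EuclideanSpace ℝ (Fin d),
      |heatKernel d (t + h) y - heatKernel d t y| ≤ ∫ u in t..(t + h), |D u y| := by
    intro y
    rw [← hFTC y]
    exact intervalIntegral.abs_integral_le_integral_abs hth
  have hw : ∀ y : EuclideanSpace ℝ (Fin d), ‖f (x - y) - f x‖ ≤ M * ‖y‖ ^ α := by
    intro y
    have := hM (x - y) x
    rwa [sub_sub_cancel_left, norm_neg] at this
  -- the inner moment bound
  have hinner : ∀ s : ℝ, 0 < s →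
      (∫⁻ y : EuclideanSpace ℝ (Fin d), ENNReal.ofReal (|D s y| * (M * ‖y‖ ^ α))) ≤
        ENNReal.ofReal (M * Ctot * s ^ (α / 2 - 1)) := by
    intro s hs
    set φ : EuclideanSpace ℝ (Fin d) → ℝ := fun y =>
      M * (heatKernel d s y * ‖y‖ ^ (α + 2) * (4 * s ^ 2)⁻¹ +
        heatKernel d s y * ‖y‖ ^ α * ((d : ℝ) / (2 * s))) with hφ
    have hφint : Integrable φ := by
      refine Integrable.const_mul ?_ M
      exact ((integrable_hk_mul d hs (by linarith)).mul_const _).add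
        ((integrable_hk_mul d hs hα.le).mul_const _)
    have hφnn : ∀ y, 0 ≤ φ y := by
      intro y
      have h1 := hk_nonneg d hs y
      have h2 : (0:ℝ) ≤ ‖y‖ ^ (α + 2) := Real.rpow_nonneg (norm_nonneg y) _
      have h3 : (0:ℝ) ≤ ‖y‖ ^ α := Real.rpow_nonneg (norm_nonneg y) _
      have h4 : (0:ℝ) ≤ (4 * s ^ 2)⁻¹ := by positivity
      have h5 : (0:ℝ) ≤ (d : ℝ) / (2 * s) := by positivity
      exact mul_nonneg hM0 (add_nonneg (mul_nonneg (mul_nonneg h1 h2) h4)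
        (mul_nonneg (mul_nonneg h1 h3) h5))
    have hpt : ∀ y, |D s y| * (M * ‖y‖ ^ α) ≤ φ y := by
      intro y
      have hknn := hk_nonneg d hs y
      have hpow : (‖y‖:ℝ) ^ (α + 2) = ‖y‖ ^ α * ‖y‖ ^ 2 := by
        have h2 : ((2:ℕ):ℝ) = (2:ℝ) := by norm_num
        rw [Real.rpow_add' (norm_nonneg y) (by positivity), ← h2, Real.rpow_natCast]
      have habs : |D s y| ≤ heatKernel d s y * (‖y‖ ^ 2 / (4 * s ^ 2) + d / (2 * s)) := by
        rw [hD]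
        simp only
        rw [abs_mul, abs_of_nonneg hknn]
        refine mul_le_mul_of_nonneg_left ?_ hknn
        have h1 : (0:ℝ) ≤ ‖y‖ ^ 2 / (4 * s ^ 2) := by positivity
        have h2 : (0:ℝ) ≤ (d : ℝ) / (2 * s) := by positivity
        rw [abs_le]
        constructor <;> linarith
      have hMy : (0:ℝ) ≤ M * ‖y‖ ^ α :=
        mul_nonneg hM0 (Real.rpow_nonneg (norm_nonneg y) _)
      calc |D s y| * (M * ‖y‖ ^ α)
          ≤ (heatKernel d s y * (‖y‖ ^ 2 / (4 * s ^ 2) + d / (2 * s))) * (M * ‖y‖ ^ α) :=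
            mul_le_mul_of_nonneg_right habs hMy
        _ = φ y := by
            rw [hφ]
            simp only
            rw [hpow]
            field_simp
    calc (∫⁻ y : EuclideanSpace ℝ (Fin d), ENNReal.ofReal (|D s y| * (M * ‖y‖ ^ α)))
        ≤ ∫⁻ y : EuclideanSpace ℝ (Fin d), ENNReal.ofReal (φ y) :=
          lintegral_mono fun y => ENNReal.ofReal_le_ofReal (hpt y)
      _ = ENNReal.ofReal (∫ y, φ y) :=
          (ofReal_integral_eq_lintegral_ofReal hφint
            (Filter.Eventually.of_forall hφnn)).symm
      _ ≤ ENNReal.ofReal (M * Ctot * s ^ (α / 2 - 1)) := by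
          apply ENNReal.ofReal_le_ofReal
          apply le_of_eq
          rw [hφ]
          simp only
          rw [MeasureTheory.integral_const_mul, integral_add
            ((integrable_hk_mul d hs (by linarith)).mul_const _)
            ((integrable_hk_mul d hs hα.le).mul_const _),
            MeasureTheory.integral_mul_const, MeasureTheory.integral_mul_const,
            moment_scaling d hs (by linarith : (0:ℝ) ≤ α + 2),
            moment_scaling d hs hα.le, ← hcA, ← hcA2]
          have e1 : s ^ ((α + 2) / 2) = s ^ (α / 2 - 1) * (s * s) := by
            rw [show (α + 2) / 2 = (α / 2 - 1) + 1 + 1 by ring, Real.rpow_add hs,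
              Real.rpow_add hs, Real.rpow_one]
            ring
          have e2 : s ^ (α / 2) = s ^ (α / 2 - 1) * s := by
            rw [show s ^ (α / 2 - 1) * s = s ^ (α / 2 - 1) * s ^ (1:ℝ) by rw [Real.rpow_one],
              ← Real.rpow_add hs]
            norm_num
          rw [e1, e2, hCtotdef]
          field_simp
          ring
  -- measurability for Tonelli
  have hmeasD : Measurable (fun p : (EuclideanSpace ℝ (Fin d)) × ℝ =>
      ENNReal.ofReal (|D p.2 p.1| * (M * ‖p.1‖ ^ α))) := by
    apply Measurable.ennreal_ofReal
    apply Measurable.mul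
    · apply Measurable.abs
      rw [hD]
      simp only [heatKernel]
      apply Measurable.mul
      · apply Measurable.mul
        · exact (measurable_const.mul measurable_snd).pow_const _
        · exact (((measurable_norm.comp measurable_fst).pow_const 2).neg.div
            (measurable_const.mul measurable_snd)).exp
      · exact (((measurable_norm.comp measurable_fst).pow_const 2).div
          (measurable_const.mul (measurable_snd.pow_const 2))).sub
          (measurable_const.div (measurable_const.mul measurable_snd))
    · exact measurable_const.mul ((measurable_norm.comp measurable_fst).pow_const α)
  -- the main estimate
  have hcontΔw : Continuous (fun y : EuclideanSpace ℝ (Fin d) =>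
      (heatKernel d (t + h) y - heatKernel d t y) • (f (x - y) - f x)) :=
    ((hkc _ hth0).sub (hkc _ ht)).smul
      ((hf.comp (continuous_const.sub continuous_id)).sub continuous_const)
  have hN3 : (∫⁻ y : EuclideanSpace ℝ (Fin d),
      ‖(heatKernel d (t + h) y - heatKernel d t y) • (f (x - y) - f x)‖₊) ≤
      ENNReal.ofReal (M * Ctot * (K * (t ^ (-α / 2) * h ^ α))) := by
    have hIntD : ∀ y : EuclideanSpace ℝ (Fin d),
        IntegrableOn (fun u => |D u y| * (M * ‖y‖ ^ α)) (Ioc t (t + h)) := by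
      intro y
      have h2 : IntervalIntegrable (fun u => |D u y| * (M * ‖y‖ ^ α)) volume t (t + h) :=
        (((hDcont y).abs).mul continuousOn_const).intervalIntegrable
      exact h2.1
    calc (∫⁻ y : EuclideanSpace ℝ (Fin d),
        ‖(heatKernel d (t + h) y - heatKernel d t y) • (f (x - y) - f x)‖₊)
        ≤ ∫⁻ y : EuclideanSpace ℝ (Fin d),
            ENNReal.ofReal ((∫ u in t..(t + h), |D u y|) * (M * ‖y‖ ^ α)) := by
          apply lintegral_mono
          intro y
          beta_reduce
          rw [← ENNReal.ofReal_coe_nnreal, coe_nnnorm]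
          apply ENNReal.ofReal_le_ofReal
          rw [norm_smul, Real.norm_eq_abs]
          exact mul_le_mul (hΔ y) (hw y) (norm_nonneg _)
            (intervalIntegral.integral_nonneg hth fun u _ => abs_nonneg _)
      _ = ∫⁻ y : EuclideanSpace ℝ (Fin d),
            ∫⁻ u in Ioc t (t + h), ENNReal.ofReal (|D u y| * (M * ‖y‖ ^ α)) := by
          congr 1
          funext y
          rw [← intervalIntegral.integral_mul_const, intervalIntegral.integral_of_le hth,
            ofReal_integral_eq_lintegral_ofReal (hIntD y) ?_]
          filter_upwards [] with u
          exact mul_nonneg (abs_nonneg _)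
            (mul_nonneg hM0 (Real.rpow_nonneg (norm_nonneg _) _))
      _ = ∫⁻ u in Ioc t (t + h), ∫⁻ y : EuclideanSpace ℝ (Fin d),
            ENNReal.ofReal (|D u y| * (M * ‖y‖ ^ α)) :=
          lintegral_lintegral_swap hmeasD.aemeasurable
      _ ≤ ∫⁻ u in Ioc t (t + h), ENNReal.ofReal (M * Ctot * u ^ (α / 2 - 1)) := by
          apply lintegral_mono_ae
          filter_upwards [ae_restrict_mem measurableSet_Ioc] with u hu
          exact hinner u (lt_trans ht hu.1)
      _ = ENNReal.ofReal (∫ u in Ioc t (t + h), M * Ctot * u ^ (α / 2 - 1)) := by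
          rw [ofReal_integral_eq_lintegral_ofReal ?_ ?_]
          · have hnotin : (0:ℝ) ∉ uIcc t (t + h) := by
              rw [Set.mem_uIcc]; push_neg
              constructor <;> intro hc <;> linarith
            exact ((intervalIntegral.intervalIntegrable_rpow
              (Or.inr hnotin)).1).const_mul (M * Ctot)
          · filter_upwards [ae_restrict_mem measurableSet_Ioc] with u hu
            have hu0 : (0:ℝ) < u := lt_trans ht hu.1
            have := Real.rpow_nonneg hu0.le (α / 2 - 1)
            exact mul_nonneg (mul_nonneg hM0 hCtot0) this
      _ ≤ ENNReal.ofReal (M * Ctot * (K * (t ^ (-α / 2) * h ^ α))) := by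
          apply ENNReal.ofReal_le_ofReal
          rw [← intervalIntegral.integral_of_le hth, intervalIntegral.integral_const_mul, hKdef]
          exact mul_le_mul_of_nonneg_left (scalar_est hα hα1 ht hh)
            (mul_nonneg hM0 hCtot0)
  have hfinal : ‖∫ y, (heatKernel d (t + h) y - heatKernel d t y) • (f (x - y) - f x)‖ ≤
      M * Ctot * (K * (t ^ (-α / 2) * h ^ α)) := by
    calc ‖∫ y, (heatKernel d (t + h) y - heatKernel d t y) • (f (x - y) - f x)‖
        ≤ ∫ y, ‖(heatKernel d (t + h) y - heatKernel d t y) • (f (x - y) - f x)‖ :=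
          norm_integral_le_integral_norm _
      _ = (∫⁻ y : EuclideanSpace ℝ (Fin d),
            ‖(heatKernel d (t + h) y - heatKernel d t y) • (f (x - y) - f x)‖₊).toReal :=
          integral_norm_eq_lintegral_enorm hcontΔw.aestronglyMeasurable
      _ ≤ M * Ctot * (K * (t ^ (-α / 2) * h ^ α)) := by
          apply ENNReal.toReal_le_of_le_ofReal ?_ hN3
          have hX : (0:ℝ) ≤ t ^ (-α / 2) * h ^ α := by positivity
          exact mul_nonneg (mul_nonneg hM0 hCtot0) (mul_nonneg hK0.le hX)
  have hX : (0:ℝ) ≤ t ^ (-α / 2) * h ^ α := by positivity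
  refine le_trans hfinal ?_
  have hMX : (0:ℝ) ≤ M * (t ^ (-α / 2) * h ^ α) := mul_nonneg hM0 hX
  nlinarith [mul_nonneg hM0 hX, mul_nonneg (mul_nonneg hCtot0 hK0.le) hMX]
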